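/- Let T be a contraction on a Hilbert space H. Then there is a Hilbert space K containing H as a closed subspace and a unitary U on K such that Tⁿ = P_H Uⁿ|_H for all n ∈ ℤ₊, where P_H is the orthogonal projection of K onto H (Sz.-Nagy dilation theorem). -/

import Mathlib

open ContinuousLinearMap Polynomial
open scoped ComplexOrder ENNReal

namespace SzNagy

variable {H : Type} [NormedAddCommGroup H] [InnerProductSpace ℂ H] [CompleteSpace H]

noncomputable def defect (T : H →L[ℂ] H) : H →L[ℂ] H := cfc Real.sqrt (1 - adjoint T * T)

lemma sa_one_sub (T : H →L[ℂ] H) : IsSelfAdjoint ((1 : H →L[ℂ] H) - adjoint T * T) := by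
  rw [IsSelfAdjoint, star_sub, star_one, star_mul, star_eq_adjoint, star_eq_adjoint,
    adjoint_adjoint]

lemma pos_one_sub (T : H →L[ℂ] H) (hT : ‖T‖ ≤ 1) :
    (0 : H →L[ℂ] H) ≤ 1 - adjoint T * T := by
  rw [ContinuousLinearMap.nonneg_iff_isPositive]
  refine ⟨(isSelfAdjoint_iff_isSymmetric.mp (sa_one_sub T)), fun x => ?_⟩
  have hx : ‖T x‖ ≤ ‖x‖ := by
    calc ‖T x‖ ≤ ‖T‖ * ‖x‖ := T.le_opNorm x
      _ ≤ 1 * ‖x‖ := mul_le_mul_of_nonneg_right hT (norm_nonneg x)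
      _ = ‖x‖ := one_mul _
  have hx2 : ‖T x‖ ^ 2 ≤ ‖x‖ ^ 2 := pow_le_pow_left₀ (norm_nonneg _) hx 2
  unfold ContinuousLinearMap.reApplyInnerSelf
  have happ : ((1 - adjoint T * T) x) = x - adjoint T (T x) := rfl
  rw [happ, inner_sub_left, adjoint_inner_left, map_sub,
    inner_self_eq_norm_sq (𝕜 := ℂ) x, inner_self_eq_norm_sq (𝕜 := ℂ) (T x)]
  linarith

lemma pos_atat (T : H →L[ℂ] H) : (0 : H →L[ℂ] H) ≤ adjoint T * T := by
  simpa [star_eq_adjoint] using star_mul_self_nonneg T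

lemma norm_one_sub_le (T : H →L[ℂ] H) (hT : ‖T‖ ≤ 1) :
    ‖(1 : H →L[ℂ] H) - adjoint T * T‖ ≤ 1 := by
  rw [CStarAlgebra.norm_le_one_iff_of_nonneg _ (pos_one_sub T hT)]
  simpa using sub_le_self (1 : H →L[ℂ] H) (pos_atat T)

lemma spec_sub [Nontrivial H] (T : H →L[ℂ] H) (hT : ‖T‖ ≤ 1) :
    spectrum ℝ ((1 : H →L[ℂ] H) - adjoint T * T) ⊆ Set.Icc 0 1 := by
  intro x hx
  refine ⟨spectrum_nonneg_of_nonneg (pos_one_sub T hT) hx, ?_⟩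
  have h1 : ‖x‖ ≤ ‖(1 : H →L[ℂ] H) - adjoint T * T‖ := spectrum.norm_le_norm_of_mem hx
  have := norm_one_sub_le T hT
  calc x ≤ |x| := le_abs_self x
    _ = ‖x‖ := rfl
    _ ≤ 1 := h1.trans this

lemma defect_sq (T : H →L[ℂ] H) (hT : ‖T‖ ≤ 1) :
    defect T * defect T = 1 - adjoint T * T := by
  rw [defect, ← cfc_mul ..]
  have h := cfc_congr (a := (1 : H →L[ℂ] H) - adjoint T * T)
      (f := fun x => Real.sqrt x * Real.sqrt x) (g := fun x => x) ?_
  · rw [h, cfc_id' ℝ _ (sa_one_sub T)]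
  · intro x hx
    have hx0 : 0 ≤ x := spectrum_nonneg_of_nonneg (pos_one_sub T hT) hx
    simp [Real.mul_self_sqrt hx0]

lemma defect_sa (T : H →L[ℂ] H) : IsSelfAdjoint (defect T) := by
  rw [defect]
  exact IsSelfAdjoint.cfc

lemma poly_intertwine (T : H →L[ℂ] H) (p : ℝ[X]) :
    T * aeval ((1 : H →L[ℂ] H) - adjoint T * T) p
      = aeval ((1 : H →L[ℂ] H) - T * adjoint T) p * T := by
  set A : H →L[ℂ] H := 1 - adjoint T * T with hA
  set B : H →L[ℂ] H := 1 - T * adjoint T with hB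
  have key : T * A = B * T := by rw [hA, hB]; noncomm_ring
  have keyn : ∀ n : ℕ, T * A ^ n = B ^ n * T := by
    intro n
    induction n with
    | zero => simp
    | succ n ih => rw [pow_succ, pow_succ, ← mul_assoc, ih, mul_assoc, key, ← mul_assoc]
  induction p using Polynomial.induction_on with
  | C r => simp only [aeval_C]; rw [Algebra.commutes]
  | add p q hp hq => simp only [map_add, mul_add, add_mul, hp, hq]
  | monomial n r _ =>
      simp only [map_mul, aeval_C, map_pow, aeval_X]
      calc T * (algebraMap ℝ _ r * A ^ (n + 1))
          = algebraMap ℝ _ r * (T * A ^ (n + 1)) := by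
            rw [← mul_assoc, ← Algebra.commutes r T, mul_assoc]
        _ = algebraMap ℝ _ r * (B ^ (n + 1) * T) := by rw [keyn]
        _ = algebraMap ℝ _ r * B ^ (n + 1) * T := by rw [mul_assoc]

lemma sqrt_poly_approx {ε : ℝ} (hε : 0 < ε) :
    ∃ p : ℝ[X], ∀ x ∈ Set.Icc (0 : ℝ) 1, |Real.sqrt x - p.eval x| ≤ ε := by
  set f : C(Set.Icc (0:ℝ) 1, ℝ) :=
    ⟨fun x => Real.sqrt x, Real.continuous_sqrt.comp continuous_subtype_val⟩ with hf
  have hdense := polynomialFunctions.topologicalClosure (Set.Icc (0:ℝ) 1)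
  have hfmem : f ∈ (polynomialFunctions (Set.Icc (0:ℝ) 1)).topologicalClosure := by
    rw [hdense]; trivial
  have hf' : f ∈ closure ((polynomialFunctions (Set.Icc (0:ℝ) 1) : Set _)) := hfmem
  obtain ⟨g, hg_mem, hg⟩ := Metric.mem_closure_iff.mp hf' ε hε
  rw [polynomialFunctions_coe] at hg_mem
  obtain ⟨p, rfl⟩ := hg_mem
  refine ⟨p, fun x hx => ?_⟩
  have hb := ContinuousMap.dist_apply_le_dist (f := f)
    (g := Polynomial.toContinuousMapOnAlgHom _ p) (⟨x, hx⟩ : Set.Icc (0:ℝ) 1)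
  have : dist (Real.sqrt x) (p.eval x) ≤ dist f (Polynomial.toContinuousMapOnAlgHom _ p) := hb
  rw [Real.dist_eq] at this
  exact this.trans hg.le

lemma intertwine [Nontrivial H] (T : H →L[ℂ] H) (hT : ‖T‖ ≤ 1) :
    T * defect T = defect (adjoint T) * T := by
  set A : H →L[ℂ] H := 1 - adjoint T * T with hA
  set B : H →L[ℂ] H := 1 - T * adjoint T with hB
  have hT' : ‖adjoint T‖ ≤ 1 := by
    rw [LinearIsometryEquiv.norm_map ContinuousLinearMap.adjoint T]; exact hT
  have hB' : B = 1 - adjoint (adjoint T) * adjoint T := by rw [adjoint_adjoint]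
  have hAsa : IsSelfAdjoint A := sa_one_sub T
  have hBsa : IsSelfAdjoint B := by rw [hB']; exact sa_one_sub (adjoint T)
  have hDT : defect T = cfc Real.sqrt A := rfl
  have hDT' : defect (adjoint T) = cfc Real.sqrt B := by rw [defect, ← hB']
  have specA := spec_sub T hT
  have specB : spectrum ℝ B ⊆ Set.Icc 0 1 := by rw [hB']; exact spec_sub (adjoint T) hT'
  have main : ∀ ε : ℝ, 0 < ε → ‖T * defect T - defect (adjoint T) * T‖ ≤ 2 * ε := by
    intro ε hε
    obtain ⟨p, hp⟩ := sqrt_poly_approx hε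
    have hTA : T * aeval A p = aeval B p * T := poly_intertwine T p
    have bound : ∀ (C : H →L[ℂ] H), IsSelfAdjoint C → spectrum ℝ C ⊆ Set.Icc 0 1 →
        ‖cfc Real.sqrt C - aeval C p‖ ≤ ε := by
      intro C hCsa hCs
      rw [← cfc_polynomial p C, ← cfc_sub _ _]
      refine norm_cfc_le hε.le fun x hx => ?_
      have := hp x (hCs hx)
      simpa [Real.norm_eq_abs] using this
    have expand : T * defect T - defect (adjoint T) * T
        = T * (cfc Real.sqrt A - aeval A p) - (cfc Real.sqrt B - aeval B p) * T := by
      rw [mul_sub, sub_mul, hTA, hDT, hDT']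
      abel
    rw [expand]
    calc ‖T * (cfc Real.sqrt A - aeval A p) - (cfc Real.sqrt B - aeval B p) * T‖
        ≤ ‖T * (cfc Real.sqrt A - aeval A p)‖ + ‖(cfc Real.sqrt B - aeval B p) * T‖ :=
          norm_sub_le _ _
      _ ≤ ‖T‖ * ‖cfc Real.sqrt A - aeval A p‖ + ‖cfc Real.sqrt B - aeval B p‖ * ‖T‖ := by
          gcongr <;> exact norm_mul_le _ _
      _ ≤ 1 * ε + ε * 1 := by
          have h1 := bound A hAsa specA
          have h2 := bound B hBsa specB
          have := norm_nonneg (cfc Real.sqrt A - aeval A p)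
          have := norm_nonneg (cfc Real.sqrt B - aeval B p)
          nlinarith [norm_nonneg T]
      _ = 2 * ε := by ring
  have hnorm0 : ‖T * defect T - defect (adjoint T) * T‖ ≤ 0 := by
    refine le_of_forall_pos_le_add fun ε hε => ?_
    have := main (ε / 2) (by linarith)
    linarith
  have := le_antisymm hnorm0 (norm_nonneg _)
  rwa [norm_eq_zero, sub_eq_zero] at this

abbrev Ksp (H : Type) [NormedAddCommGroup H] : Type := lp (fun _ : ℤ => H) (2 : ℝ≥0∞)

lemma two_pos : (0:ℝ) < (2 : ℝ≥0∞).toReal := by norm_num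

lemma single_apply' (i : ℤ) (a : H) (j : ℤ) :
    (lp.single 2 i a : Ksp H) j = if j = i then a else 0 := by
  rw [lp.single_apply]
  by_cases h : j = i
  · subst h; simp
  · simp [h]

noncomputable def evalL (i : ℤ) : Ksp H →L[ℂ] H :=
  LinearMap.mkContinuous
    { toFun := fun x => x i
      map_add' := fun _ _ => rfl
      map_smul' := fun _ _ => rfl }
    1 (fun x => by
      show ‖x i‖ ≤ 1 * ‖x‖
      simpa using lp.norm_apply_le_norm (by norm_num : (2:ℝ≥0∞) ≠ 0) x i)

@[simp] lemma evalL_apply (i : ℤ) (x : Ksp H) : evalL i x = x i := rfl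

noncomputable def singleLi (i : ℤ) : H →ₗᵢ[ℂ] Ksp H where
  toLinearMap :=
    { toFun := fun a => lp.single 2 i a
      map_add' := fun a b => by
        apply lp.ext; funext j
        rw [lp.coeFn_add, Pi.add_apply, single_apply', single_apply', single_apply']
        split_ifs <;> simp
      map_smul' := fun c a => by simp }
  norm_map' := fun a => by
    show ‖(lp.single 2 i a : Ksp H)‖ = ‖a‖
    exact lp.norm_single (E := fun _ : ℤ => H) (p := 2) (by norm_num) i a

noncomputable def singleL (i : ℤ) : H →L[ℂ] Ksp H := (singleLi i).toContinuousLinearMap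

@[simp] lemma singleL_apply (i : ℤ) (a : H) (j : ℤ) :
    (singleL i a : Ksp H) j = if j = i then a else 0 := single_apply' i a j

@[simp] lemma norm_singleL (i : ℤ) (a : H) : ‖(singleL i a : Ksp H)‖ = ‖a‖ :=
  (singleLi i).norm_map a

lemma memℓp_comp_sub (x : Ksp H) (k : ℤ) : Memℓp (fun n => x (n - k) : ∀ _ : ℤ, H) 2 := by
  apply memℓp_gen
  have hs := (lp.memℓp x).summable two_pos
  exact ((Equiv.subRight k).summable_iff
    (f := fun i => ‖x i‖ ^ (2:ℝ≥0∞).toReal)).mpr hs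

noncomputable def shiftLi : Ksp H ≃ₗᵢ[ℂ] Ksp H where
  toLinearEquiv :=
    { toFun := fun x => ⟨fun n => x (n - 1), memℓp_comp_sub x 1⟩
      invFun := fun x => ⟨fun n => x (n + 1), by
        have := memℓp_comp_sub x (-1); simp only [sub_neg_eq_add] at this; exact this⟩
      map_add' := fun x y => by
        apply lp.ext; funext n
        show (x + y) (n - 1) = x (n - 1) + y (n - 1)
        exact congrFun (lp.coeFn_add x y) (n - 1)
      map_smul' := fun c x => by
        apply lp.ext; funext n
        show (c • x) (n - 1) = c • x (n - 1)
        exact congrFun (lp.coeFn_smul c x) (n - 1)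
      left_inv := fun x => by
        apply lp.ext; funext n
        show x (n + 1 - 1) = x n
        exact congrArg (fun m => x m) (by omega : n + 1 - 1 = n)
      right_inv := fun x => by
        apply lp.ext; funext n
        show x (n - 1 + 1) = x n
        exact congrArg (fun m => x m) (by omega : n - 1 + 1 = n) }
  norm_map' := fun x => by
    rw [lp.norm_eq_tsum_rpow two_pos, lp.norm_eq_tsum_rpow two_pos]
    congr 1
    exact ((Equiv.subRight (1:ℤ)).tsum_eq (fun i => ‖x i‖ ^ (2:ℝ≥0∞).toReal))

noncomputable def shiftL : Ksp H →L[ℂ] Ksp H := shiftLi.toLinearIsometry.toContinuousLinearMap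

noncomputable def shiftL' : Ksp H →L[ℂ] Ksp H :=
  shiftLi.symm.toLinearIsometry.toContinuousLinearMap

@[simp] lemma shiftL_apply (x : Ksp H) (n : ℤ) : (shiftL x : Ksp H) n = x (n - 1) := rfl

lemma adjoint_shiftL : adjoint (shiftL : Ksp H →L[ℂ] Ksp H) = shiftL' := by
  symm
  rw [eq_adjoint_iff]
  intro x y
  have h1 : (shiftL' x : Ksp H) = shiftLi.symm x := rfl
  have h2 : (shiftL y : Ksp H) = shiftLi y := rfl
  rw [h1, h2, ← shiftLi.inner_map_map (shiftLi.symm x) y, shiftLi.apply_symm_apply]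

lemma shiftL'_comp_shiftL : (shiftL' ∘L shiftL : Ksp H →L[ℂ] Ksp H) = 1 := by
  ext x : 1
  rw [ContinuousLinearMap.comp_apply, ContinuousLinearMap.one_apply]
  exact shiftLi.symm_apply_apply x

lemma shiftL_comp_shiftL' : (shiftL ∘L shiftL' : Ksp H →L[ℂ] Ksp H) = 1 := by
  ext x : 1
  rw [ContinuousLinearMap.comp_apply, ContinuousLinearMap.one_apply]
  exact shiftLi.apply_symm_apply x

lemma adjoint_singleL (i : ℤ) : adjoint (singleL i : H →L[ℂ] Ksp H) = evalL i := by
  symm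
  rw [eq_adjoint_iff]
  intro x y
  rw [evalL_apply]
  exact (lp.inner_single_right (𝕜 := ℂ) i y x).symm

lemma adjoint_evalL (i : ℤ) : adjoint (evalL i : Ksp H →L[ℂ] H) = singleL i := by
  rw [← adjoint_singleL, adjoint_adjoint]

noncomputable def elem (i j : ℤ) (A : H →L[ℂ] H) : Ksp H →L[ℂ] Ksp H :=
  singleL i ∘L A ∘L evalL j

lemma elem_apply (i j : ℤ) (A : H →L[ℂ] H) (x : Ksp H) (n : ℤ) :
    (elem i j A x : Ksp H) n = if n = i then A (x j) else 0 := by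
  simp [elem]

lemma adjoint_elem (i j : ℤ) (A : H →L[ℂ] H) :
    adjoint (elem i j A) = elem j i (adjoint A) := by
  rw [elem, elem, adjoint_comp, adjoint_comp, adjoint_singleL, adjoint_evalL]
  rfl

noncomputable def bop (a b c d : H →L[ℂ] H) : Ksp H →L[ℂ] Ksp H :=
  1 - elem (-1) (-1) 1 - elem 0 0 1 + elem (-1) (-1) a + elem (-1) 0 b
    + elem 0 (-1) c + elem 0 0 d

lemma bop_apply (a b c d : H →L[ℂ] H) (x : Ksp H) (n : ℤ) :
    (bop a b c d x : Ksp H) n =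
      if n = -1 then a (x (-1)) + b (x 0)
      else if n = 0 then c (x (-1)) + d (x 0) else x n := by
  have expand : (bop a b c d x : Ksp H) n
      = x n - (elem (-1) (-1) (1:H →L[ℂ] H) x : Ksp H) n - (elem 0 0 (1:H →L[ℂ] H) x : Ksp H) n
        + (elem (-1) (-1) a x : Ksp H) n + (elem (-1) 0 b x : Ksp H) n
        + (elem 0 (-1) c x : Ksp H) n + (elem 0 0 d x : Ksp H) n := by
    rw [bop]
    simp only [ContinuousLinearMap.add_apply, ContinuousLinearMap.sub_apply,
      ContinuousLinearMap.one_apply]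
    rw [lp.coeFn_add, lp.coeFn_add, lp.coeFn_add, lp.coeFn_add,
      lp.coeFn_sub, lp.coeFn_sub]
    rfl
  rw [expand]
  simp only [elem_apply]
  by_cases h1 : n = -1
  · subst h1; norm_num
  · by_cases h0 : n = 0
    · subst h0; norm_num
    · simp [h1, h0]

lemma bop_comp (a b c d a' b' c' d' : H →L[ℂ] H) :
    bop a' b' c' d' ∘L bop a b c d
      = bop (a' * a + b' * c) (a' * b + b' * d) (c' * a + d' * c) (c' * b + d' * d) := by
  ext x : 1
  apply lp.ext; funext n
  rw [ContinuousLinearMap.comp_apply]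
  simp only [bop_apply]
  by_cases h1 : n = -1
  · subst h1
    norm_num [ContinuousLinearMap.add_apply, ContinuousLinearMap.mul_apply, map_add]
    abel
  · by_cases h0 : n = 0
    · subst h0
      norm_num [ContinuousLinearMap.add_apply, ContinuousLinearMap.mul_apply, map_add]
      abel
    · simp [h1, h0]

lemma bop_one : (bop 1 0 0 1 : Ksp H →L[ℂ] Ksp H) = 1 := by
  ext x : 1
  rw [ContinuousLinearMap.one_apply]
  apply lp.ext; funext n
  rw [bop_apply]
  by_cases h1 : n = -1
  · subst h1; simp
  · by_cases h0 : n = 0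
    · subst h0; simp
    · simp [h1, h0]

lemma adjoint_bop (a b c d : H →L[ℂ] H) :
    adjoint (bop a b c d)
      = bop (adjoint a) (adjoint c) (adjoint b) (adjoint d) := by
  rw [bop, bop]
  simp only [map_add, map_sub, adjoint_elem]
  have h1 : adjoint (1 : Ksp H →L[ℂ] Ksp H) = 1 := by
    rw [← star_eq_adjoint, star_one]
  have h2 : adjoint (1 : H →L[ℂ] H) = 1 := by
    rw [← star_eq_adjoint, star_one]
  rw [h1, h2]
  abel

section Main

variable {H : Type} [NormedAddCommGroup H] [InnerProductSpace ℂ H] [CompleteSpace H]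

noncomputable def Uop (T : H →L[ℂ] H) : Ksp H →L[ℂ] Ksp H :=
  shiftL ∘L bop (defect (adjoint T)) T (-(adjoint T)) (defect T)

variable [Nontrivial H] (T : H →L[ℂ] H)

lemma star_intertwine (hT : ‖T‖ ≤ 1) :
    defect T * adjoint T = adjoint T * defect (adjoint T) := by
  have h := congrArg star (intertwine T hT)
  rwa [star_mul, star_mul, (defect_sa T).star_eq, (defect_sa (adjoint T)).star_eq,
    star_eq_adjoint] at h

lemma bop_unitary₁ (hT : ‖T‖ ≤ 1) :
    bop (defect (adjoint T)) (-T) (adjoint T) (defect T) ∘L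
      bop (defect (adjoint T)) T (-(adjoint T)) (defect T) = 1 := by
  rw [bop_comp]
  have hT' : ‖adjoint T‖ ≤ 1 := by
    rw [LinearIsometryEquiv.norm_map ContinuousLinearMap.adjoint T]; exact hT
  have hsqA : defect T * defect T = 1 - adjoint T * T := defect_sq T hT
  have hsqB : defect (adjoint T) * defect (adjoint T) = 1 - T * adjoint T := by
    rw [defect_sq (adjoint T) hT', adjoint_adjoint]
  have hint : T * defect T = defect (adjoint T) * T := intertwine T hT
  have hint' : defect T * adjoint T = adjoint T * defect (adjoint T) := star_intertwine T hT
  have e1 : defect (adjoint T) * defect (adjoint T) + (-T) * (-(adjoint T)) = 1 := by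
    rw [hsqB, neg_mul_neg, sub_add_cancel]
  have e2 : defect (adjoint T) * T + (-T) * defect T = 0 := by
    rw [neg_mul, ← hint]; simp
  have e3 : adjoint T * defect (adjoint T) + defect T * (-(adjoint T)) = 0 := by
    rw [mul_neg, ← hint']; simp
  have e4 : adjoint T * T + defect T * defect T = 1 := by
    rw [hsqA, add_sub_cancel]
  rw [e1, e2, e3, e4, bop_one]

lemma bop_unitary₂ (hT : ‖T‖ ≤ 1) :
    bop (defect (adjoint T)) T (-(adjoint T)) (defect T) ∘L
      bop (defect (adjoint T)) (-T) (adjoint T) (defect T) = 1 := by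
  rw [bop_comp]
  have hT' : ‖adjoint T‖ ≤ 1 := by
    rw [LinearIsometryEquiv.norm_map ContinuousLinearMap.adjoint T]; exact hT
  have hsqA : defect T * defect T = 1 - adjoint T * T := defect_sq T hT
  have hsqB : defect (adjoint T) * defect (adjoint T) = 1 - T * adjoint T := by
    rw [defect_sq (adjoint T) hT', adjoint_adjoint]
  have hint : T * defect T = defect (adjoint T) * T := intertwine T hT
  have hint' : defect T * adjoint T = adjoint T * defect (adjoint T) := star_intertwine T hT
  have e1 : defect (adjoint T) * defect (adjoint T) + T * adjoint T = 1 := by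
    rw [hsqB, sub_add_cancel]
  have e2 : defect (adjoint T) * (-T) + T * defect T = 0 := by
    rw [mul_neg, hint]; simp
  have e3 : -(adjoint T) * defect (adjoint T) + defect T * adjoint T = 0 := by
    rw [neg_mul, hint']; simp
  have e4 : -(adjoint T) * (-T) + defect T * defect T = 1 := by
    rw [neg_mul_neg, hsqA, add_sub_cancel]
  rw [e1, e2, e3, e4, bop_one]

lemma adjoint_bop_main :
    adjoint (bop (defect (adjoint T)) T (-(adjoint T)) (defect T))
      = bop (defect (adjoint T)) (-T) (adjoint T) (defect T) := by
  rw [adjoint_bop]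
  have h1 : adjoint (defect (adjoint T)) = defect (adjoint T) := by
    rw [← star_eq_adjoint]; exact (defect_sa (adjoint T)).star_eq
  have h2 : adjoint (-(adjoint T)) = -T := by
    rw [← star_eq_adjoint, star_neg, star_eq_adjoint, adjoint_adjoint]
  have h3 : adjoint T = adjoint T := rfl
  have h4 : adjoint (defect T) = defect T := by
    rw [← star_eq_adjoint]; exact (defect_sa T).star_eq
  rw [h1, h2, h4]

lemma Uop_adj_mul (hT : ‖T‖ ≤ 1) : adjoint (Uop T) * Uop T = 1 := by
  have hadj : adjoint (Uop T)
      = bop (defect (adjoint T)) (-T) (adjoint T) (defect T) * shiftL' := by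
    show adjoint (shiftL ∘L bop (defect (adjoint T)) T (-(adjoint T)) (defect T)) = _
    rw [adjoint_comp, adjoint_shiftL, adjoint_bop_main T]
    rfl
  have hUeq : Uop T = shiftL * bop (defect (adjoint T)) T (-(adjoint T)) (defect T) := rfl
  have hS : shiftL' * shiftL = (1 : Ksp H →L[ℂ] Ksp H) := shiftL'_comp_shiftL
  have hBB : bop (defect (adjoint T)) (-T) (adjoint T) (defect T)
      * bop (defect (adjoint T)) T (-(adjoint T)) (defect T) = 1 := bop_unitary₁ T hT
  rw [hadj, hUeq, mul_assoc, ← mul_assoc shiftL' shiftL, hS, one_mul, hBB]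

lemma Uop_mul_adj (hT : ‖T‖ ≤ 1) : Uop T * adjoint (Uop T) = 1 := by
  have hadj : adjoint (Uop T)
      = bop (defect (adjoint T)) (-T) (adjoint T) (defect T) * shiftL' := by
    show adjoint (shiftL ∘L bop (defect (adjoint T)) T (-(adjoint T)) (defect T)) = _
    rw [adjoint_comp, adjoint_shiftL, adjoint_bop_main T]
    rfl
  have hUeq : Uop T = shiftL * bop (defect (adjoint T)) T (-(adjoint T)) (defect T) := rfl
  have hS : shiftL * shiftL' = (1 : Ksp H →L[ℂ] Ksp H) := shiftL_comp_shiftL'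
  have hBB : bop (defect (adjoint T)) T (-(adjoint T)) (defect T)
      * bop (defect (adjoint T)) (-T) (adjoint T) (defect T) = 1 := bop_unitary₂ T hT
  rw [hadj, hUeq, mul_assoc, ← mul_assoc _ (bop (defect (adjoint T)) (-T) (adjoint T) (defect T))
    shiftL', hBB, one_mul, hS]

lemma dilation_coord (n : ℕ) (h : H) :
    ∀ m : ℤ, m ≤ 0 →
      (((Uop T ^ n) (singleL 0 h) : Ksp H) m) = if m = 0 then (T ^ n) h else 0 := by
  induction n with
  | zero =>
      intro m _
      rw [pow_zero, pow_zero, ContinuousLinearMap.one_apply, singleL_apply]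
      by_cases hm : m = 0 <;> simp [hm]
  | succ n ih =>
      intro m hm
      have hpow : (Uop T ^ (n + 1)) (singleL 0 h) = Uop T ((Uop T ^ n) (singleL 0 h)) := by
        rw [pow_succ']; rfl
      rw [hpow]
      have hco : ((Uop T ((Uop T ^ n) (singleL 0 h)) : Ksp H) m)
          = ((bop (defect (adjoint T)) T (-(adjoint T)) (defect T)
              ((Uop T ^ n) (singleL 0 h)) : Ksp H) (m - 1)) := rfl
      rw [hco, bop_apply]
      by_cases hm0 : m = 0
      · subst hm0
        rw [if_pos (by norm_num : (0:ℤ) - 1 = -1)]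
        rw [ih (-1) (by norm_num), ih 0 le_rfl]
        rw [if_neg (by norm_num : ¬ (-1 : ℤ) = 0), if_pos rfl, map_zero, zero_add, if_pos rfl]
        rw [← ContinuousLinearMap.mul_apply, ← pow_succ']
      · have h1 : ¬ (m - 1 = -1) := by omega
        have h2 : ¬ (m - 1 = 0) := by omega
        rw [if_neg h1, if_neg h2, ih (m - 1) (by omega), if_neg (by omega), if_neg hm0]

end Main

end SzNagy

/-- Sz.-Nagy dilation theorem: every contraction `T` on a Hilbert space `H`
admits a unitary dilation: there are a Hilbert space `K`, an isometric embedding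
`V : H → K` (realizing `H` as a closed subspace of `K`, with `adjoint V` playing the role
of the orthogonal projection `P_H`), and a unitary `U` on `K` with
`Tⁿ = P_H Uⁿ |_H` for all n ∈ ℤ₊. -/
theorem stmt12 {H : Type} [NormedAddCommGroup H] [InnerProductSpace ℂ H] [CompleteSpace H]
    (T : H →L[ℂ] H) (hT : ‖T‖ ≤ 1) :
    ∃ (K : Type) (_ : NormedAddCommGroup K) (_ : InnerProductSpace ℂ K) (_ : CompleteSpace K)
      (V : H →L[ℂ] K) (U : K →L[ℂ] K),
      (∀ x : H, ‖V x‖ = ‖x‖)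
      ∧ ContinuousLinearMap.adjoint U * U = 1
      ∧ U * ContinuousLinearMap.adjoint U = 1
      ∧ ∀ n : ℕ, T ^ n = ContinuousLinearMap.adjoint V ∘L (U ^ n) ∘L V := by
  rcases subsingleton_or_nontrivial H with hsub | hnt
  · haveI : Subsingleton (H →L[ℂ] H) :=
      ⟨fun f g => ContinuousLinearMap.ext fun x => Subsingleton.elim _ _⟩
    have hadj1 : ContinuousLinearMap.adjoint (1 : H →L[ℂ] H) = 1 := by
      rw [← ContinuousLinearMap.star_eq_adjoint, star_one]
    refine ⟨H, ‹_›, ‹_›, ‹_›, 1, 1, ?_, ?_, ?_, ?_⟩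
    · intro x
      rw [Subsingleton.elim x 0]
      simp
    · rw [hadj1, one_mul]
    · rw [hadj1, one_mul]
    · exact fun n => Subsingleton.elim _ _
  · refine ⟨lp (fun _ : ℤ => H) 2, inferInstance, inferInstance, inferInstance,
      SzNagy.singleL 0, SzNagy.Uop T,
      fun x => SzNagy.norm_singleL 0 x,
      SzNagy.Uop_adj_mul T hT, SzNagy.Uop_mul_adj T hT, fun n => ?_⟩
    apply ContinuousLinearMap.ext
    intro h
    rw [ContinuousLinearMap.comp_apply, ContinuousLinearMap.comp_apply,
      SzNagy.adjoint_singleL, SzNagy.evalL_apply]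
    have hd := SzNagy.dilation_coord T n h 0 le_rfl
    rw [if_pos rfl] at hd
    exact hd.symm
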